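/- Every g-properly colored branching instance is a Degree Bounded Matroid Independent Set instance with Δ = 3: the feasible arc sets are exactly the independent sets of a matroid (graphic matroid of the underlying graph) satisfying hyperedge bounds in a hypergraph where each arc lies in at most 3 hyperedges, namely δ^in(v) with bound 1 for each vertex v, and δ_{E_i}(v) with bound g_i(v) for each vertex v and color i (where δ counts all incident arcs of color i). -/

import Mathlib

open scoped Classical

/-- A cycle of length `n` in the underlying undirected multigraph of the arc set `F`. -/
def IsUCycleIn {V ε : Type*} (tail head : ε → V) (F : Finset ε) (n : ℕ) : Prop :=
  ∃ (vs : ZMod n → V) (es : ZMod n → ε), Function.Injective vs ∧ Function.Injective es ∧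
    ∀ i : ZMod n, es i ∈ F ∧
      ((tail (es i), head (es i)) = (vs i, vs (i + 1)) ∨
        (tail (es i), head (es i)) = (vs (i + 1), vs i))

/-- The underlying edge set of `F` is a forest. -/
def IsUForest {V ε : Type*} (tail head : ε → V) (F : Finset ε) : Prop :=
  ∀ n : ℕ, 1 ≤ n → ¬ IsUCycleIn tail head F n

/-- A directed cycle of length `n` in the arc set `F`. -/
def IsDirCycleIn {V ε : Type*} (tail head : ε → V) (F : Finset ε) (n : ℕ) : Prop :=
  ∃ (vs : ZMod n → V) (es : ZMod n → ε), Function.Injective vs ∧ Function.Injective es ∧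
    ∀ i : ZMod n, es i ∈ F ∧ tail (es i) = vs i ∧ head (es i) = vs (i + 1)

/-- `F` is a branching: every vertex has in-degree at most one and `F` has no directed
cycle (equivalently, `F` is a union of vertex-disjoint arborescences). -/
def IsBranching {V ε : Type*} [DecidableEq ε] (tail head : ε → V) (F : Finset ε) : Prop :=
  (∀ v : V, (F.filter (fun e => head e = v)).card ≤ 1) ∧
    ∀ n : ℕ, 1 ≤ n → ¬ IsDirCycleIn tail head F n

/-- The hyperedges of the DBMIS instance associated with `g`-properly colored
branchings: `δ^in(v)` for each vertex `v`, and `δ_{E_i}(v)` for each vertex `v` and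
color `i`. -/
def branchingHyp {V ε C : Type*} (tail head : ε → V) (c : ε → C) :
    V ⊕ (V × C) → Set ε
  | Sum.inl v => {e | head e = v}
  | Sum.inr (v, i) => {e | c e = i ∧ (tail e = v ∨ head e = v)}

/-- The bounds of the DBMIS instance: `1` on each `δ^in(v)` and `g i v` on `δ_{E_i}(v)`. -/
def branchingBound {V C : Type*} (g : C → V → ℕ) : V ⊕ (V × C) → ℕ
  | Sum.inl _ => 1
  | Sum.inr (v, i) => g i v

lemma dirCycle_of_left {V ε : Type*} [DecidableEq ε] (tail head : ε → V) (F : Finset ε)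
    {n : ℕ} (hn : 2 ≤ n)
    (hdeg : ∀ v : V, (F.filter (fun e => head e = v)).card ≤ 1)
    (vs : ZMod n → V) (es : ZMod n → ε)
    (hvs : Function.Injective vs) (hes : Function.Injective es)
    (hmem : ∀ i : ZMod n, es i ∈ F ∧
      ((tail (es i), head (es i)) = (vs i, vs (i + 1)) ∨
        (tail (es i), head (es i)) = (vs (i + 1), vs i)))
    (j : ZMod n) (hj : (tail (es j), head (es j)) = (vs j, vs (j + 1))) :
    IsDirCycleIn tail head F n := by
  haveI : NeZero n := ⟨by omega⟩
  have hone : (1 : ZMod n) ≠ 0 := by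
    haveI : Fact (1 < n) := ⟨hn⟩
    exact one_ne_zero
  have step : ∀ i : ZMod n, (tail (es i), head (es i)) = (vs i, vs (i + 1)) →
      (tail (es (i + 1)), head (es (i + 1))) = (vs (i + 1), vs (i + 1 + 1)) := by
    intro i hi
    rcases (hmem (i + 1)).2 with h | h
    · exact h
    · exfalso
      have h1 : head (es i) = vs (i + 1) := (Prod.ext_iff.1 hi).2
      have h2 : head (es (i + 1)) = vs (i + 1) := (Prod.ext_iff.1 h).2
      have hne : es i ≠ es (i + 1) := by
        intro hh
        have h3 := hes hh
        have : (1 : ZMod n) = 0 := by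
          have := congrArg (fun x => x - i) h3
          simpa using this.symm
        exact hone this
      have hsub : ({es i, es (i + 1)} : Finset ε) ⊆
          F.filter (fun e => head e = vs (i + 1)) := by
        intro e he
        simp only [Finset.mem_insert, Finset.mem_singleton] at he
        rcases he with rfl | rfl
        · simp [Finset.mem_filter, (hmem i).1, h1]
        · simp [Finset.mem_filter, (hmem (i + 1)).1, h2]
      have hcard := Finset.card_le_card hsub
      rw [Finset.card_insert_of_notMem (by simpa using hne), Finset.card_singleton] at hcard
      have := hdeg (vs (i + 1))
      omega
  have all : ∀ k : ℕ, (tail (es (j + k)), head (es (j + k))) = (vs (j + k), vs (j + k + 1)) := by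
    intro k
    induction k with
    | zero => simpa using hj
    | succ m ih =>
        have h := step _ ih
        have heq : (j + (↑(m + 1) : ZMod n)) = j + ↑m + 1 := by push_cast; ring
        rw [heq]
        exact h
  refine ⟨vs, es, hvs, hes, fun i => ⟨(hmem i).1, ?_, ?_⟩⟩
  · have h := all (i - j).val
    rw [ZMod.natCast_rightInverse (i - j)] at h
    have hij : j + (i - j) = i := by ring
    rw [hij] at h
    exact (Prod.ext_iff.1 h).1
  · have h := all (i - j).val
    rw [ZMod.natCast_rightInverse (i - j)] at h
    have hij : j + (i - j) = i := by ring
    rw [hij] at h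
    exact (Prod.ext_iff.1 h).2

theorem gProperColoredBranching_dbmis {V ε C : Type*} [DecidableEq ε]
    (tail head : ε → V) (hloopless : ∀ e : ε, tail e ≠ head e)
    (c : ε → C) (g : C → V → ℕ) :
    (∀ F : Finset ε,
      (IsBranching tail head F ∧
          ∀ v : V, ∀ i : C,
            (F.filter (fun e => c e = i ∧ (tail e = v ∨ head e = v))).card ≤ g i v) ↔
        (IsUForest tail head F ∧
          ∀ idx : V ⊕ (V × C),
            (F.filter (fun e => e ∈ branchingHyp tail head c idx)).card ≤
              branchingBound g idx)) ∧
    (∀ e : ε, Set.ncard {idx : V ⊕ (V × C) | e ∈ branchingHyp tail head c idx} ≤ 3) := by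
  constructor
  · intro F
    constructor
    · rintro ⟨⟨hdeg, hnodir⟩, hcol⟩
      refine ⟨?_, ?_⟩
      · intro n hn hcyc
        obtain ⟨vs, es, hvs, hes, hmem⟩ := hcyc
        rcases Nat.lt_or_ge n 2 with h2 | h2
        · -- n = 1
          have hn1 : n = 1 := by omega
          subst hn1
          have h01 : (0 + 1 : ZMod 1) = 0 := Subsingleton.elim _ _
          rcases (hmem 0).2 with h | h <;>
            · rw [h01] at h
              simp only [Prod.mk.injEq] at h
              exact hloopless (es 0) (h.1.trans h.2.symm)
        · rcases (hmem 0).2 with h | h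
          · exact hnodir n hn (dirCycle_of_left tail head F h2 hdeg vs es hvs hes hmem 0 h)
          · set vs' : ZMod n → V := fun i => vs (-i) with hvs'def
            set es' : ZMod n → ε := fun i => es (-i - 1) with hes'def
            have hvs' : Function.Injective vs' := hvs.comp neg_injective
            have hes' : Function.Injective es' := by
              intro a b hab
              have h3 := hes hab
              have : -a = -b := by
                have := congrArg (fun x => x + 1) h3
                simpa using this
              exact neg_injective this
            have hmem' : ∀ i : ZMod n, es' i ∈ F ∧
                ((tail (es' i), head (es' i)) = (vs' i, vs' (i + 1)) ∨
                  (tail (es' i), head (es' i)) = (vs' (i + 1), vs' i)) := by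
              intro i
              refine ⟨(hmem (-i - 1)).1, ?_⟩
              have e1 : vs' (i + 1) = vs (-i - 1) := by
                simp only [hvs'def]
                congr 1
                ring
              have e2 : vs' i = vs (-i - 1 + 1) := by
                simp only [hvs'def]
                congr 1
                ring
              rcases (hmem (-i - 1)).2 with hh | hh
              · right
                rw [e1, e2]
                exact hh
              · left
                rw [e1, e2]
                exact hh
            have hj : (tail (es' (-1)), head (es' (-1))) = (vs' (-1), vs' (-1 + 1)) := by
              have e0 : es' (-1) = es 0 := by simp [hes'def]
              have e1 : vs' (-1) = vs 1 := by simp [hvs'def]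
              have e2 : vs' (-1 + 1) = vs 0 := by simp [hvs'def]
              rw [e0, e1, e2]
              rw [zero_add] at h
              exact h
            exact hnodir n hn
              (dirCycle_of_left tail head F h2 hdeg vs' es' hvs' hes' hmem' (-1) hj)
      · intro idx
        rcases idx with v | ⟨v, i⟩
        · simp only [branchingHyp, branchingBound, Set.mem_setOf_eq]
          convert hdeg v using 2
        · simp only [branchingHyp, branchingBound, Set.mem_setOf_eq]
          convert hcol v i using 2
    · rintro ⟨hforest, hbd⟩
      refine ⟨⟨fun v => by
          have h := hbd (Sum.inl v)
          simp only [branchingHyp, branchingBound, Set.mem_setOf_eq] at h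
          convert h using 2, ?_⟩,
        fun v i => by
          have h := hbd (Sum.inr (v, i))
          simp only [branchingHyp, branchingBound, Set.mem_setOf_eq] at h
          convert h using 2⟩
      intro n hn hdir
      obtain ⟨vs, es, hvs, hes, hmem⟩ := hdir
      exact hforest n hn ⟨vs, es, hvs, hes, fun i => ⟨(hmem i).1,
        Or.inl (by rw [(hmem i).2.1, (hmem i).2.2])⟩⟩
  · intro e
    have hsub : {idx : V ⊕ (V × C) | e ∈ branchingHyp tail head c idx} ⊆
        ↑({Sum.inl (head e), Sum.inr (tail e, c e), Sum.inr (head e, c e)} :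
          Finset (V ⊕ (V × C))) := by
      rintro (v | ⟨v, i⟩) h
      · simp only [branchingHyp, Set.mem_setOf_eq] at h
        simp [h]
      · simp only [branchingHyp, Set.mem_setOf_eq] at h
        obtain ⟨hi, hv⟩ := h
        rcases hv with rfl | rfl <;> simp [hi]
    calc Set.ncard {idx : V ⊕ (V × C) | e ∈ branchingHyp tail head c idx}
        ≤ Set.ncard (↑({Sum.inl (head e), Sum.inr (tail e, c e), Sum.inr (head e, c e)} :
            Finset (V ⊕ (V × C)))) :=
          Set.ncard_le_ncard hsub (Finset.finite_toSet _)
      _ = ({Sum.inl (head e), Sum.inr (tail e, c e), Sum.inr (head e, c e)} :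
            Finset (V ⊕ (V × C))).card := Set.ncard_coe_finset _
      _ ≤ 3 := by
          refine (Finset.card_insert_le _ _).trans ?_
          have := Finset.card_insert_le (Sum.inr (tail e, c e) : V ⊕ (V × C))
            ({Sum.inr (head e, c e)} : Finset (V ⊕ (V × C)))
          simp at this ⊢
          omega
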